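/- Every complete CAT(0) space is √2-hyperconvex: if X is a complete CAT(0) space and (xᵢ)_{i∈I} is a family of points of X with positive radii (rᵢ)_{i∈I} satisfying rᵢ + rⱼ ≥ d(xᵢ,xⱼ) for all i,j ∈ I, then the intersection ⋂_{i∈I} B̄(xᵢ, √2·rᵢ) is nonempty. -/

import Mathlib

open Real Set Filter


/-- `γ` is a geodesic from `x` to `y`: an isometric embedding of `[0, dist x y]`
with `γ 0 = x` and `γ (dist x y) = y`. -/
def IsGeodesicFrom {X : Type*} [MetricSpace X] (x y : X) (γ : ℝ → X) : Prop :=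
  γ 0 = x ∧ γ (dist x y) = y ∧
    ∀ s ∈ Set.Icc (0:ℝ) (dist x y), ∀ t ∈ Set.Icc (0:ℝ) (dist x y),
      dist (γ s) (γ t) = |s - t|

/-- A metric space is geodesic if every pair of points is joined by a geodesic. -/
def GeodesicSpace (X : Type*) [MetricSpace X] : Prop :=
  ∀ x y : X, ∃ γ : ℝ → X, IsGeodesicFrom x y γ

/-- The point at arclength `t` on the Euclidean segment from `a` to `b`. -/
noncomputable def cmpPt (a b : EuclideanSpace ℝ (Fin 2)) (t : ℝ) :
    EuclideanSpace ℝ (Fin 2) :=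
  AffineMap.lineMap a b (t / dist a b)

/-- A geodesic metric space is CAT(0) if every geodesic triangle satisfies the
comparison inequality with respect to any comparison triangle in the Euclidean
plane: any two points on the sides of the triangle are at distance at most the
distance of the corresponding points (at the same arclength parameters) on the
comparison triangle. -/
def IsCAT0 (X : Type*) [MetricSpace X] : Prop :=
  GeodesicSpace X ∧
  ∀ (x₁ x₂ x₃ : X) (γ₁₂ γ₁₃ γ₂₃ : ℝ → X),
    IsGeodesicFrom x₁ x₂ γ₁₂ → IsGeodesicFrom x₁ x₃ γ₁₃ → IsGeodesicFrom x₂ x₃ γ₂₃ →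
    ∀ (y₁ y₂ y₃ : EuclideanSpace ℝ (Fin 2)),
      dist y₁ y₂ = dist x₁ x₂ → dist y₁ y₃ = dist x₁ x₃ → dist y₂ y₃ = dist x₂ x₃ →
      (∀ s ∈ Set.Icc (0:ℝ) (dist x₁ x₂), ∀ t ∈ Set.Icc (0:ℝ) (dist x₁ x₂),
        dist (γ₁₂ s) (γ₁₂ t) ≤ dist (cmpPt y₁ y₂ s) (cmpPt y₁ y₂ t)) ∧
      (∀ s ∈ Set.Icc (0:ℝ) (dist x₁ x₃), ∀ t ∈ Set.Icc (0:ℝ) (dist x₁ x₃),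
        dist (γ₁₃ s) (γ₁₃ t) ≤ dist (cmpPt y₁ y₃ s) (cmpPt y₁ y₃ t)) ∧
      (∀ s ∈ Set.Icc (0:ℝ) (dist x₂ x₃), ∀ t ∈ Set.Icc (0:ℝ) (dist x₂ x₃),
        dist (γ₂₃ s) (γ₂₃ t) ≤ dist (cmpPt y₂ y₃ s) (cmpPt y₂ y₃ t)) ∧
      (∀ s ∈ Set.Icc (0:ℝ) (dist x₁ x₂), ∀ t ∈ Set.Icc (0:ℝ) (dist x₁ x₃),
        dist (γ₁₂ s) (γ₁₃ t) ≤ dist (cmpPt y₁ y₂ s) (cmpPt y₁ y₃ t)) ∧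
      (∀ s ∈ Set.Icc (0:ℝ) (dist x₁ x₂), ∀ t ∈ Set.Icc (0:ℝ) (dist x₂ x₃),
        dist (γ₁₂ s) (γ₂₃ t) ≤ dist (cmpPt y₁ y₂ s) (cmpPt y₂ y₃ t)) ∧
      (∀ s ∈ Set.Icc (0:ℝ) (dist x₁ x₃), ∀ t ∈ Set.Icc (0:ℝ) (dist x₂ x₃),
        dist (γ₁₃ s) (γ₂₃ t) ≤ dist (cmpPt y₁ y₃ s) (cmpPt y₂ y₃ t))

noncomputable def p₂ (a b : ℝ) : EuclideanSpace ℝ (Fin 2) :=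
  (WithLp.equiv 2 (Fin 2 → ℝ)).symm ![a, b]

lemma dist_p₂ (a b c d : ℝ) :
    dist (p₂ a b) (p₂ c d) = Real.sqrt ((a - c)^2 + (b - d)^2) := by
  rw [EuclideanSpace.dist_eq]
  simp [p₂, Fin.sum_univ_two, Real.dist_eq, sq_abs]

lemma smul_p₂ (r a b : ℝ) : r • p₂ a b = p₂ (r*a) (r*b) := by
  ext j; fin_cases j <;> simp [p₂]

lemma p₂_zero : p₂ 0 0 = 0 := by
  ext j; fin_cases j <;> simp [p₂]

lemma lineMap_p₂ (a b c : ℝ) :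
    AffineMap.lineMap (p₂ 0 0) (p₂ a b) c = p₂ (c*a) (c*b) := by
  rw [AffineMap.lineMap_apply, p₂_zero, vsub_eq_sub, sub_zero, vadd_eq_add, add_zero, smul_p₂]

lemma cmpPt_dist_self (a b : EuclideanSpace ℝ (Fin 2)) : cmpPt a b (dist a b) = b := by
  unfold cmpPt
  rcases eq_or_ne (dist a b) 0 with hd | hd
  · have hab : a = b := dist_eq_zero.1 hd
    subst hab
    simp [AffineMap.lineMap_same]
  · rw [div_self hd, AffineMap.lineMap_apply_one]

lemma CN_mul {X : Type*} [MetricSpace X] (hX : IsCAT0 X) (p q z : X) {t : ℝ}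
    (ht : t ∈ Set.Icc (0:ℝ) (dist p q)) {γ : ℝ → X} (hγ : IsGeodesicFrom p q γ) :
    dist p q * dist (γ t) z ^ 2 ≤
      dist p q * (t ^ 2 + dist p z ^ 2) - t * (dist p q ^ 2 + dist p z ^ 2 - dist q z ^ 2) := by
  obtain ⟨γ₁₃, hγ₁₃⟩ := hX.1 p z
  obtain ⟨γ₂₃, hγ₂₃⟩ := hX.1 q z
  rcases eq_or_lt_of_le (dist_nonneg : (0:ℝ) ≤ dist p q) with hD | hD
  · have ht0 : t = 0 := le_antisymm (le_trans ht.2 (le_of_eq hD.symm)) ht.1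
    subst ht0
    rw [hγ.1, ← hD]
    ring_nf
    simp
  · set D := dist p q with hDdef
    set A := dist p z with hAdef
    set B := dist q z with hBdef
    have hA : 0 ≤ A := dist_nonneg
    have hB : 0 ≤ B := dist_nonneg
    have htri1 : B ≤ D + A := by
      rw [hBdef, hDdef, hAdef, dist_comm p q]; exact dist_triangle q p z
    have htri2 : A ≤ D + B := by
      rw [hBdef, hDdef, hAdef]; exact dist_triangle p q z
    have htri3 : D ≤ A + B := by
      rw [hBdef, hDdef, hAdef, dist_comm q z]; exact dist_triangle p z q
    set u := (D^2 + A^2 - B^2) / (2*D) with hudef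
    have h2Du : 2*D*u = D^2 + A^2 - B^2 := by
      rw [hudef]; field_simp
    have hu2 : u^2 ≤ A^2 := by
      have f1 : 0 ≤ B^2 - (D - A)^2 := by nlinarith
      have f2 : 0 ≤ (D + A)^2 - B^2 := by nlinarith
      have h2 : (D^2 + A^2 - B^2)^2 ≤ (2*D*A)^2 := by nlinarith [mul_nonneg f1 f2]
      have h3 : (2*D*u)^2 ≤ (2*D*A)^2 := by rw [h2Du]; exact h2
      have h4 : (4*D^2) * u^2 ≤ (4*D^2) * A^2 := by nlinarith [h3]
      exact le_of_mul_le_mul_left h4 (by positivity)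
    set v := Real.sqrt (A^2 - u^2) with hvdef
    have hv : v^2 = A^2 - u^2 := Real.sq_sqrt (by linarith)
    have hv0 : 0 ≤ v := Real.sqrt_nonneg _
    have hd12 : dist (p₂ 0 0) (p₂ D 0) = D := by
      rw [dist_p₂]
      have : (0 - D)^2 + ((0:ℝ) - 0)^2 = D^2 := by ring
      rw [this, Real.sqrt_sq hD.le]
    have hd13 : dist (p₂ 0 0) (p₂ u v) = A := by
      rw [dist_p₂]
      have : (0 - u)^2 + (0 - v)^2 = A^2 := by linear_combination hv
      rw [this, Real.sqrt_sq hA]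
    have hd23 : dist (p₂ D 0) (p₂ u v) = B := by
      rw [dist_p₂]
      have : (D - u)^2 + (0 - v)^2 = B^2 := by linear_combination hv - h2Du
      rw [this, Real.sqrt_sq hB]
    obtain ⟨_, _, _, H4, _, _⟩ := hX.2 p q z γ γ₁₃ γ₂₃ hγ hγ₁₃ hγ₂₃ (p₂ 0 0) (p₂ D 0) (p₂ u v)
      hd12 hd13 hd23
    have key := H4 t ht A ⟨hA, le_rfl⟩
    rw [hγ₁₃.2.1] at key
    have hy3 : cmpPt (p₂ 0 0) (p₂ u v) A = p₂ u v := by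
      rw [← hd13]; exact cmpPt_dist_self _ _
    rw [hy3] at key
    have hy12 : cmpPt (p₂ 0 0) (p₂ D 0) t = p₂ t 0 := by
      unfold cmpPt
      rw [hd12, lineMap_p₂, div_mul_cancel₀ _ (ne_of_gt hD), mul_zero]
    rw [hy12, dist_p₂] at key
    have hsum : (0:ℝ) ≤ (t - u)^2 + (0 - v)^2 := by positivity
    have hsq : dist (γ t) z ^ 2 ≤ (t - u)^2 + (0 - v)^2 := by
      have h1 : dist (γ t) z ^ 2 ≤ Real.sqrt ((t - u)^2 + (0 - v)^2) ^ 2 :=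
        pow_le_pow_left₀ dist_nonneg key 2
      rwa [Real.sq_sqrt hsum] at h1
    have h5 : 2*D*u*t = (D^2 + A^2 - B^2)*t := by rw [h2Du]
    have h6 : D*v^2 = D*(A^2 - u^2) := by rw [hv]
    nlinarith [mul_le_mul_of_nonneg_left hsq hD.le, h5, h6]

lemma exists_midpoint {X : Type*} [MetricSpace X] (hX : IsCAT0 X) (p q : X) :
    ∃ w : X, ∀ z : X,
      dist w z ^ 2 ≤ dist p z ^ 2 / 2 + dist q z ^ 2 / 2 - dist p q ^ 2 / 4 := by
  obtain ⟨γ, hγ⟩ := hX.1 p q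
  refine ⟨γ (dist p q / 2), fun z => ?_⟩
  have hD : (0:ℝ) ≤ dist p q := dist_nonneg
  have hmem : dist p q / 2 ∈ Set.Icc (0:ℝ) (dist p q) := ⟨by linarith, by linarith⟩
  have hcn := CN_mul hX p q z hmem hγ
  rcases eq_or_lt_of_le hD with hD0 | hD0
  · have hpq : p = q := dist_eq_zero.1 hD0.symm
    subst hpq
    have h0 : dist p p = 0 := dist_self p
    rw [h0]
    norm_num
    rw [hγ.1]
  · nlinarith [hcn, hD0]

set_option maxHeartbeats 1600000 in
/-- Every complete CAT(0) space is √2-hyperconvex. -/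
theorem stmt4 {X : Type*} [MetricSpace X] [CompleteSpace X] [Nonempty X]
    (hX : IsCAT0 X) {ι : Type*} (x : ι → X) (r : ι → ℝ) (hr : ∀ i, 0 < r i)
    (h : ∀ i j, dist (x i) (x j) ≤ r i + r j) :
    (⋂ i, Metric.closedBall (x i) (Real.sqrt 2 * r i)).Nonempty := by
  rcases isEmpty_or_nonempty ι with hι | hι
  · obtain ⟨y⟩ := (inferInstance : Nonempty X)
    exact ⟨y, Set.mem_iInter.2 fun i => (hι.elim i)⟩
  · haveI := hι
    obtain ⟨i₀⟩ := hι
    set T : ι → X → ℝ := fun i y => dist y (x i) ^ 2 - 2 * r i ^ 2 with hT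
    have hbdd : ∀ y : X, BddAbove (Set.range fun i => T i y) := by
      intro y
      refine ⟨2 * (dist y (x i₀) + r i₀) ^ 2, ?_⟩
      rintro _ ⟨i, rfl⟩
      have h1 : dist y (x i) ≤ dist y (x i₀) + (r i₀ + r i) :=
        le_trans (dist_triangle y (x i₀) (x i)) (by linarith [h i₀ i])
      have h2 := hr i
      have h3 := hr i₀
      have h4 : (0:ℝ) ≤ dist y (x i) := dist_nonneg
      have h5 : (0:ℝ) ≤ dist y (x i₀) := dist_nonneg
      simp only [hT]
      nlinarith [sq_nonneg (dist y (x i₀) + r i₀ - r i)]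
    set g : X → ℝ := fun y => ⨆ i, T i y with hg
    have hle : ∀ y i, T i y ≤ g y := fun y i => le_ciSup (hbdd y) i
    have hgle : ∀ (y : X) (c : ℝ), (∀ i, T i y ≤ c) → g y ≤ c := fun y c hc => ciSup_le hc
    have hlb : BddBelow (Set.range g) := by
      refine ⟨-(2 * r i₀ ^ 2), ?_⟩
      rintro _ ⟨y, rfl⟩
      have h1 := hle y i₀
      have h2 : (0:ℝ) ≤ dist y (x i₀) ^ 2 := sq_nonneg _
      simp only [hT] at h1
      linarith
    set m := sInf (Set.range g) with hm
    have hrng : (Set.range g).Nonempty := ⟨g (x i₀), ⟨x i₀, rfl⟩⟩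
    have hmle : ∀ y, m ≤ g y := fun y => csInf_le hlb ⟨y, rfl⟩
    have hseq : ∀ n : ℕ, ∃ y : X, g y < m + 1 / ((n:ℝ) + 1) := by
      intro n
      obtain ⟨a, ⟨y, rfl⟩, ha⟩ := Real.lt_sInf_add_pos hrng
        (by positivity : (0:ℝ) < 1 / ((n:ℝ) + 1))
      exact ⟨y, ha⟩
    choose u hu using hseq
    have hpair : ∀ a b : ℕ, dist (u a) (u b) ^ 2 ≤
        4 * (1 / ((a:ℝ) + 1) + 1 / ((b:ℝ) + 1)) := by
      intro a b
      obtain ⟨w, hw⟩ := exists_midpoint hX (u a) (u b)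
      have h1 : g w ≤ g (u a) / 2 + g (u b) / 2 - dist (u a) (u b) ^ 2 / 4 := by
        apply hgle
        intro i
        have h2 := hle (u a) i
        have h3 := hle (u b) i
        have h4 := hw (x i)
        simp only [hT] at *
        linarith
      have h5 := hmle w
      have h6 := (hu a).le
      have h7 := (hu b).le
      have h8 : (0:ℝ) ≤ 1 / ((a:ℝ) + 1) := by positivity
      have h9 : (0:ℝ) ≤ 1 / ((b:ℝ) + 1) := by positivity
      linarith
    have hcauchy : CauchySeq u := by
      rw [Metric.cauchySeq_iff]
      intro ε hε
      obtain ⟨N, hN⟩ := exists_nat_gt (8 / ε ^ 2)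
      refine ⟨N, fun a ha b hb => ?_⟩
      have hNa : (1:ℝ) / ((a:ℝ) + 1) ≤ 1 / ((N:ℝ) + 1) := by
        apply one_div_le_one_div_of_le (by positivity)
        have : (N:ℝ) ≤ (a:ℝ) := Nat.cast_le.2 ha
        linarith
      have hNb : (1:ℝ) / ((b:ℝ) + 1) ≤ 1 / ((N:ℝ) + 1) := by
        apply one_div_le_one_div_of_le (by positivity)
        have : (N:ℝ) ≤ (b:ℝ) := Nat.cast_le.2 hb
        linarith
      have h8 : 8 / ((N:ℝ) + 1) < ε ^ 2 := by
        rw [div_lt_iff₀ (by positivity)]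
        have h9 : 8 / ε ^ 2 * ε ^ 2 < (N:ℝ) * ε ^ 2 :=
          mul_lt_mul_of_pos_right hN (by positivity)
        rw [div_mul_cancel₀ _ (by positivity : (ε:ℝ) ^ 2 ≠ 0)] at h9
        nlinarith [sq_nonneg ε]
      have h10 : dist (u a) (u b) ^ 2 < ε ^ 2 := by
        have hNN : 8 / ((N:ℝ) + 1) = 8 * (1 / ((N:ℝ) + 1)) := by ring
        linarith [hpair a b, hNa, hNb, h8, hNN.le, hNN.ge]
      nlinarith [dist_nonneg (x := u a) (y := u b), hε]
    obtain ⟨y₀, hy₀⟩ := cauchySeq_tendsto_of_complete hcauchy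
    have hterm : ∀ i, T i y₀ ≤ m := by
      intro i
      have hc : Tendsto (fun n => T i (u n)) atTop (nhds (T i y₀)) := by
        simp only [hT]
        exact ((hy₀.dist tendsto_const_nhds).pow 2).sub tendsto_const_nhds
      have hd : Tendsto (fun n : ℕ => m + 1 / ((n:ℝ) + 1)) atTop (nhds m) := by
        have h1 := tendsto_one_div_add_atTop_nhds_zero_nat (𝕜 := ℝ)
        simpa using tendsto_const_nhds.add h1
      exact le_of_tendsto_of_tendsto' hc hd fun n => le_trans (hle (u n) i) (hu n).le
    have hm0 : m ≤ 0 := by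
      by_contra hm0
      push_neg at hm0
      have hgy : g y₀ = m := le_antisymm (hgle _ _ hterm) (hmle y₀)
      obtain ⟨k, hk⟩ := exists_lt_of_lt_ciSup (show m / 2 < g y₀ by rw [hgy]; linarith)
      have hk' : m / 2 < dist y₀ (x k) ^ 2 - 2 * r k ^ 2 := hk
      have hak : 0 < dist y₀ (x k) := by
        have h1 : 0 < dist y₀ (x k) ^ 2 := by nlinarith [hr k]
        have h2 : (0:ℝ) ≤ dist y₀ (x k) := dist_nonneg
        nlinarith
      set a := dist y₀ (x k) with hadef
      set t := min a (3 * m / (4 * a)) with htdef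
      have ht0 : 0 < t := lt_min hak (by positivity)
      have hta : t ≤ a := min_le_left _ _
      have hat : a * t ≤ 3 * m / 4 := by
        have h1 : t ≤ 3 * m / (4 * a) := min_le_right _ _
        rw [le_div_iff₀ (by positivity : (0:ℝ) < 4 * a)] at h1
        linarith
      obtain ⟨γ, hγ⟩ := hX.1 y₀ (x k)
      have hball : ∀ i, a * T i (γ t) ≤ a * (m + t ^ 2) - 3 * m / 2 * t := by
        intro i
        have hCN := CN_mul hX y₀ (x k) (x i) ⟨ht0.le, hta⟩ hγ
        rw [← hadef] at hCN
        have hdki : dist (x k) (x i) ≤ r k + r i := h k i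
        have hd2 : dist (x k) (x i) ^ 2 ≤ (r k + r i) ^ 2 := by
          nlinarith [dist_nonneg (x := x k) (y := x i), hr k, hr i]
        have h3 := hterm i
        simp only [hT] at h3 ⊢
        nlinarith [hCN, mul_nonneg ht0.le (sub_nonneg.2 hd2),
          mul_nonneg (sub_nonneg.2 hta) (sub_nonneg.2 h3),
          mul_nonneg ht0.le (sq_nonneg (r k - r i)),
          mul_nonneg ht0.le (le_of_lt (show 0 < a ^ 2 - 2 * r k ^ 2 - m / 2 by linarith))]
      have hgt : g (γ t) ≤ (a * (m + t ^ 2) - 3 * m / 2 * t) / a := by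
        apply hgle
        intro i
        rw [le_div_iff₀ hak]
        linarith [hball i, mul_comm (T i (γ t)) a]
      have h11 := hmle (γ t)
      have h12 : m * a ≤ a * (m + t ^ 2) - 3 * m / 2 * t := by
        have := le_trans h11 hgt
        rw [le_div_iff₀ hak] at this
        linarith
      nlinarith [h12, hat, ht0, hm0]
    refine ⟨y₀, Set.mem_iInter.2 fun i => Metric.mem_closedBall.2 ?_⟩
    have h1 : dist y₀ (x i) ^ 2 ≤ 2 * r i ^ 2 := by
      have := hterm i
      simp only [hT] at this
      linarith
    have hs2 : Real.sqrt 2 ^ 2 = 2 := Real.sq_sqrt (by norm_num)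
    have hs0 : (0:ℝ) < Real.sqrt 2 := by
      have := Real.sqrt_pos.2 (show (0:ℝ) < 2 by norm_num); linarith
    have hsr : 0 < Real.sqrt 2 * r i := mul_pos hs0 (hr i)
    nlinarith [dist_nonneg (x := y₀) (y := x i), hsr, h1, hs2,
      mul_pos hsr hsr]
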